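/- arXiv:2501.05373 — 2 statements merged into one kernel-verified Lean document; each statement's English description precedes it below -/
import Mathlib

section
/- The function t ↦ 2·√(t·tan(π/t)) is strictly decreasing and convex on the interval (2, ∞). -/
open Real Set

/-- The interpolation `p(t) = 2√(t·tan(π/t))` of the isoperimetric constants of
unit-area regular polygons. -/
noncomputable def polyIsopConst (t : ℝ) : ℝ :=
  2 * Real.sqrt (t * Real.tan (Real.pi / t))


namespace PolyIsop

/-- first derivative of `t * tan (π/t)` -/
noncomputable def F1 (t : ℝ) : ℝ := Real.tan (π / t) - (π / t) / Real.cos (π / t) ^ 2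

/-- second derivative of `t * tan (π/t)` -/
noncomputable def F2 (t : ℝ) : ℝ :=
  2 * π ^ 2 / t ^ 3 * Real.tan (π / t) / Real.cos (π / t) ^ 2

/-- first derivative of `polyIsopConst` -/
noncomputable def P1 (t : ℝ) : ℝ := F1 t / Real.sqrt (t * Real.tan (π / t))

/-- second derivative of `polyIsopConst` -/
noncomputable def P2 (t : ℝ) : ℝ :=
  F2 t / Real.sqrt (t * Real.tan (π / t)) -
    F1 t ^ 2 / (2 * (t * Real.tan (π / t)) * Real.sqrt (t * Real.tan (π / t)))

variable {t : ℝ}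

lemma ht0 (ht : 2 < t) : 0 < t := lt_trans two_pos ht

lemma hx0 (ht : 2 < t) : 0 < π / t := div_pos pi_pos (ht0 ht)

lemma hx2 (ht : 2 < t) : π / t < π / 2 := div_lt_div_of_pos_left pi_pos two_pos ht

lemma hcos (ht : 2 < t) : 0 < Real.cos (π / t) :=
  Real.cos_pos_of_mem_Ioo ⟨by linarith [hx0 ht, pi_pos], hx2 ht⟩

lemma hsin (ht : 2 < t) : 0 < Real.sin (π / t) :=
  Real.sin_pos_of_pos_of_lt_pi (hx0 ht) (by linarith [hx2 ht, pi_pos])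

lemma htan (ht : 2 < t) : 0 < Real.tan (π / t) :=
  Real.tan_pos_of_pos_of_lt_pi_div_two (hx0 ht) (hx2 ht)

lemma hF (ht : 2 < t) : 0 < t * Real.tan (π / t) := mul_pos (ht0 ht) (htan ht)

lemma hasDerivAt_inner (ht : 2 < t) :
    HasDerivAt (fun s : ℝ => π / s) (-(π / t ^ 2)) t := by
  have := (hasDerivAt_inv (ht0 ht).ne').const_mul π
  have h : (fun s : ℝ => π / s) = fun s : ℝ => π * s⁻¹ := by
    funext s; rw [div_eq_mul_inv]
  rw [h]
  refine this.congr_deriv (Eq.symm ?_)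
  have h0 := (ht0 ht).ne'
  field_simp

lemma hasDerivAt_tanx (ht : 2 < t) :
    HasDerivAt (fun s : ℝ => Real.tan (π / s))
      (1 / Real.cos (π / t) ^ 2 * (-(π / t ^ 2))) t :=
  (Real.hasDerivAt_tan (hcos ht).ne').comp t (hasDerivAt_inner ht)

lemma hasDerivAt_F (ht : 2 < t) :
    HasDerivAt (fun s : ℝ => s * Real.tan (π / s)) (F1 t) t := by
  have := (hasDerivAt_id t).mul (hasDerivAt_tanx ht)
  refine this.congr_deriv (Eq.symm ?_)
  have h0 := (ht0 ht).ne'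
  have hc := (hcos ht).ne'
  simp only [F1, id_eq]
  field_simp
  ring

lemma hasDerivAt_F1 (ht : 2 < t) : HasDerivAt (fun s : ℝ => F1 s) (F2 t) t := by
  have hc := (hcos ht).ne'
  have h0 := (ht0 ht).ne'
  have hcossq : HasDerivAt (fun s : ℝ => Real.cos (π / s) ^ 2)
      (2 * Real.cos (π / t) ^ 1 * (-Real.sin (π / t) * -(π / t ^ 2))) t :=
    (((Real.hasDerivAt_cos (π / t)).comp t (hasDerivAt_inner ht))).pow 2
  have hinv := hcossq.inv (by positivity)
  have hprod := (hasDerivAt_inner ht).mul hinv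
  have := (hasDerivAt_tanx ht).sub hprod
  have heq : (fun s : ℝ => Real.tan (π / s) - π / s * (Real.cos (π / s) ^ 2)⁻¹)
      = fun s : ℝ => F1 s := by
    funext s; rw [F1, div_eq_mul_inv (π / s)]
  refine this.congr_deriv (Eq.symm ?_)
  rw [F2, Real.tan_eq_sin_div_cos]
  simp only [Pi.inv_apply]
  field_simp
  ring

lemma hasDerivAt_P (ht : 2 < t) : HasDerivAt polyIsopConst (P1 t) t := by
  have hsq := ((Real.hasDerivAt_sqrt (hF ht).ne').comp t (hasDerivAt_F ht)).const_mul 2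
  refine hsq.congr_deriv (Eq.symm ?_)
  have h1 : Real.sqrt (t * Real.tan (π / t)) ≠ 0 := (Real.sqrt_pos.2 (hF ht)).ne'
  rw [P1]
  field_simp

lemma hasDerivAt_P1 (ht : 2 < t) : HasDerivAt (fun s : ℝ => P1 s) (P2 t) t := by
  have hF' := hF ht
  have hsqpos : 0 < Real.sqrt (t * Real.tan (π / t)) := Real.sqrt_pos.2 hF'
  have hsq : HasDerivAt (fun s : ℝ => Real.sqrt (s * Real.tan (π / s)))
      (1 / (2 * Real.sqrt (t * Real.tan (π / t))) * F1 t) t :=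
    (Real.hasDerivAt_sqrt hF'.ne').comp t (hasDerivAt_F ht)
  have hinv := hsq.inv hsqpos.ne'
  have := (hasDerivAt_F1 ht).mul hinv
  have heq : (fun s : ℝ => F1 s * (Real.sqrt (s * Real.tan (π / s)))⁻¹)
      = fun s : ℝ => P1 s := by
    funext s; rw [P1]; exact (div_eq_mul_inv _ _).symm
  refine this.congr_deriv (Eq.symm ?_)
  rw [P2]
  set r := Real.sqrt (t * Real.tan (π / t)) with hrdef
  have hr2 : r ^ 2 = t * Real.tan (π / t) := Real.sq_sqrt hF'.le
  rw [← hr2]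
  simp only [Pi.inv_apply]
  field_simp
  ring

/-- The key inequality `x ≤ sin x * (2x + cos x)` on `(0, π/2)`. -/
lemma key (x : ℝ) (hx0 : 0 < x) (hx2 : x < π / 2) :
    x ≤ Real.sin x * (2 * x + Real.cos x) := by
  rcases le_or_gt x 1 with h1 | h1
  · have hs : x - x ^ 3 / 4 < Real.sin x :=
      lt_of_le_of_lt (by nlinarith [pow_pos hx0 3]) (Real.sin_gt_sub_cube hx0)
    have hc := Real.one_sub_sq_div_two_le_cos (x := x)
    have hcpos : 0 ≤ Real.cos x :=
      Real.cos_nonneg_of_mem_Icc ⟨by linarith [pi_pos], hx2.le⟩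
    have h4 : 0 ≤ x - x ^ 3 / 4 := by nlinarith
    have hsin0 : 0 ≤ Real.sin x := by linarith
    have hstep : (x - x ^ 3 / 4) * (2 * x + (1 - x ^ 2 / 2))
        ≤ Real.sin x * (2 * x + Real.cos x) :=
      mul_le_mul hs.le (by linarith) (by nlinarith) hsin0
    have hpoly : x ≤ (x - x ^ 3 / 4) * (2 * x + (1 - x ^ 2 / 2)) := by
      nlinarith [mul_pos hx0 hx0, sq_nonneg x,
        mul_nonneg (sq_nonneg x) (by linarith : (0:ℝ) ≤ 1 - x),
        mul_nonneg (mul_nonneg (sq_nonneg x) (by linarith : (0:ℝ) ≤ 1 - x)) hx0.le,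
        mul_nonneg (mul_nonneg (sq_nonneg x) (sq_nonneg x)) hx0.le]
    linarith
  · have hs : (1:ℝ) / 2 < Real.sin x := by
      have := Real.sin_lt_sin_of_lt_of_le_pi_div_two (x := π / 6) (y := x)
        (by linarith [pi_pos]) hx2.le (by nlinarith [pi_le_four])
      rwa [Real.sin_pi_div_six] at this
    have hcpos : 0 ≤ Real.cos x :=
      Real.cos_nonneg_of_mem_Icc ⟨by linarith [pi_pos], hx2.le⟩
    nlinarith

lemma F1_neg (ht : 2 < t) : F1 t < 0 := by
  have hc := hcos ht
  have hsc : Real.sin (π / t) * Real.cos (π / t) < π / t := by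
    have h2 : Real.sin (2 * (π / t)) < 2 * (π / t) :=
      Real.sin_lt (by positivity)
    rw [Real.sin_two_mul] at h2
    linarith
  rw [F1, Real.tan_eq_sin_div_cos]
  rw [sub_neg, div_lt_div_iff₀ hc (by positivity)]
  nlinarith [hsin ht, hx0 ht]

lemma main_ineq (ht : 2 < t) : F1 t ^ 2 ≤ 2 * (t * Real.tan (π / t)) * F2 t := by
  have hc := hcos ht
  have hs := hsin ht
  have hx := hx0 ht
  have h0 := ht0 ht
  have hk := key (π / t) hx (hx2 ht)
  have hsc : Real.sin (π / t) * Real.cos (π / t) < π / t := by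
    have h2 : Real.sin (2 * (π / t)) < 2 * (π / t) := Real.sin_lt (by positivity)
    rw [Real.sin_two_mul] at h2; linarith
  set s := Real.sin (π / t) with hsdef
  set c := Real.cos (π / t) with hcdef
  set x := π / t with hxdef
  have hF1eq : F1 t = (s * c - x) / c ^ 2 := by
    rw [F1, Real.tan_eq_sin_div_cos, ← hsdef, ← hcdef, ← hxdef]
    field_simp
  have hF2eq : 2 * (t * Real.tan (π / t)) * F2 t = 4 * x ^ 2 * s ^ 2 / c ^ 4 := by
    rw [F2, Real.tan_eq_sin_div_cos, ← hsdef, ← hcdef]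
    rw [hxdef]
    field_simp
    ring
  rw [hF1eq, hF2eq, div_pow]
  have hc4 : ((c ^ 2) ^ 2 : ℝ) = c ^ 4 := by ring
  rw [hc4]
  have h1 : 0 ≤ x - s * c := by linarith
  have h2 : x - s * c ≤ 2 * x * s := by nlinarith [hk]
  have hmain : (s * c - x) ^ 2 ≤ 4 * x ^ 2 * s ^ 2 := by
    nlinarith [mul_self_le_mul_self h1 h2]
  gcongr

lemma P1_neg (ht : 2 < t) : P1 t < 0 :=
  div_neg_of_neg_of_pos (F1_neg ht) (Real.sqrt_pos.2 (hF ht))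

lemma P2_nonneg (ht : 2 < t) : 0 ≤ P2 t := by
  have hF' := hF ht
  have hsq : 0 < Real.sqrt (t * Real.tan (π / t)) := Real.sqrt_pos.2 hF'
  rw [P2, sub_nonneg, div_le_div_iff₀ (by positivity) hsq]
  have := main_ineq ht
  calc F1 t ^ 2 * Real.sqrt (t * Real.tan (π / t))
      ≤ (2 * (t * Real.tan (π / t)) * F2 t) * Real.sqrt (t * Real.tan (π / t)) := by
        apply mul_le_mul_of_nonneg_right this hsq.le
    _ = F2 t * (2 * (t * Real.tan (π / t)) * Real.sqrt (t * Real.tan (π / t))) := by ring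

end PolyIsop

/-- The function `t ↦ 2√(t·tan(π/t))` is strictly decreasing and convex on `(2, ∞)`. -/
theorem stmt1 :
    StrictAntiOn polyIsopConst (Set.Ioi 2) ∧ ConvexOn ℝ (Set.Ioi 2) polyIsopConst := by
  have hdiff : ∀ t ∈ Set.Ioi (2:ℝ), HasDerivAt polyIsopConst (PolyIsop.P1 t) t :=
    fun t ht => PolyIsop.hasDerivAt_P ht
  have hcont : ContinuousOn polyIsopConst (Set.Ioi 2) :=
    fun t ht => ((hdiff t ht).differentiableAt.continuousAt).continuousWithinAt
  have hderiv_eq : ∀ t ∈ Set.Ioi (2:ℝ), deriv polyIsopConst t = PolyIsop.P1 t :=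
    fun t ht => (hdiff t ht).deriv
  have hev : ∀ t ∈ Set.Ioi (2:ℝ),
      deriv polyIsopConst =ᶠ[nhds t] fun s => PolyIsop.P1 s := by
    intro t ht
    filter_upwards [Ioi_mem_nhds ht] with s hs
    exact hderiv_eq s hs
  constructor
  · apply strictAntiOn_of_deriv_neg (convex_Ioi 2) hcont
    intro t ht
    rw [interior_Ioi] at ht
    rw [hderiv_eq t ht]
    exact PolyIsop.P1_neg ht
  · apply convexOn_of_deriv2_nonneg (convex_Ioi 2) hcont
    · rw [interior_Ioi]
      exact fun t ht => (hdiff t ht).differentiableAt.differentiableWithinAt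
    · rw [interior_Ioi]
      intro t ht
      have h1 : DifferentiableAt ℝ (fun s => PolyIsop.P1 s) t :=
        (PolyIsop.hasDerivAt_P1 ht).differentiableAt
      exact (((hev t ht).differentiableAt_iff).mpr h1).differentiableWithinAt
    · rw [interior_Ioi]
      intro t ht
      have h2 : deriv (deriv polyIsopConst) t = PolyIsop.P2 t := by
        rw [(hev t ht).deriv_eq]
        exact (PolyIsop.hasDerivAt_P1 ht).deriv
      show 0 ≤ deriv (deriv polyIsopConst) t
      rw [h2]
      exact PolyIsop.P2_nonneg ht
end

section
/- Let arc₁(x) denote the length of the circular arc that subtends a chord of length 1 and together with the chord encloses area x ≥ 0. Then arc₁ is strictly increasing on (0,∞), arc₁(0) = 1, arc₁'(0) = 0, and arc₁''(0) = 12. -/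
/-- `f` is the function `arc₁`: `f x` is the length of the circular arc subtending a
chord of length `1` and enclosing, together with the chord, a region of area `x`.
The implicit characterization: for the half-angle `θ ∈ (0, π)` one has chord `2R sin θ = 1`,
area `p(θ) = (θ − sin θ cos θ)/(4 sin² θ)` and arc length `θ / sin θ`. Continuity on
`[0, ∞)` pins down the value at `0`. -/
def IsArcOne (f : ℝ → ℝ) : Prop :=
  ContinuousOn f (Set.Ici 0) ∧
  ∀ θ ∈ Set.Ioo 0 Real.pi,
    f ((θ - Real.sin θ * Real.cos θ) / (4 * Real.sin θ ^ 2)) = θ / Real.sin θ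

open Real Set Filter Topology

noncomputable def pfun (θ : ℝ) : ℝ := (θ - Real.sin θ * Real.cos θ) / (4 * Real.sin θ ^ 2)
noncomputable def gfun (θ : ℝ) : ℝ := θ / Real.sin θ

lemma sin_pos' {θ : ℝ} (h : θ ∈ Ioo 0 π) : 0 < Real.sin θ := Real.sin_pos_of_pos_of_lt_pi h.1 h.2

lemma key_pos {θ : ℝ} (h : θ ∈ Ioo 0 π) : 0 < Real.sin θ - θ * Real.cos θ := by
  rcases le_or_gt (Real.cos θ) 0 with hc | hc
  · have := sin_pos' h
    nlinarith [h.1]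
  · have hθ : θ < π / 2 := by
      by_contra hle
      push_neg at hle
      have : Real.cos θ ≤ 0 := Real.cos_nonpos_of_pi_div_two_le_of_le hle (by linarith [h.2, Real.pi_pos])
      linarith
    have ht := Real.lt_tan h.1 hθ
    rw [Real.tan_eq_sin_div_cos, lt_div_iff₀ hc] at ht
    linarith

lemma num_pos {θ : ℝ} (h : θ ∈ Ioo 0 π) : 0 < θ - Real.sin θ * Real.cos θ := by
  have h2 : Real.sin (2 * θ) < 2 * θ := Real.sin_lt (by linarith [h.1])
  have : Real.sin (2*θ) = 2 * Real.sin θ * Real.cos θ := Real.sin_two_mul θ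
  linarith

lemma hasDerivAt_pfun {θ : ℝ} (h : θ ∈ Ioo 0 π) :
    HasDerivAt pfun ((Real.sin θ - θ * Real.cos θ) / (2 * Real.sin θ ^ 3)) θ := by
  have hs := sin_pos' h
  have hN : HasDerivAt (fun θ : ℝ => θ - Real.sin θ * Real.cos θ) (2 * Real.sin θ ^ 2) θ := by
    have := (Real.hasDerivAt_sin θ).mul (Real.hasDerivAt_cos θ)
    have h1 := (hasDerivAt_id θ).sub this
    refine h1.congr_deriv (Eq.symm ?_)
    have := Real.sin_sq_add_cos_sq θ
    ring_nf
    nlinarith [Real.sin_sq_add_cos_sq θ]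
  have hD : HasDerivAt (fun θ : ℝ => 4 * Real.sin θ ^ 2) (8 * Real.sin θ * Real.cos θ) θ := by
    have := ((Real.hasDerivAt_sin θ).pow 2).const_mul (4:ℝ)
    refine this.congr_deriv (Eq.symm ?_)
    ring
  have := hN.div hD (by positivity)
  refine this.congr_deriv (Eq.symm ?_)
  have hsc := Real.sin_sq_add_cos_sq θ
  field_simp
  ring_nf
  nlinarith [hsc, sq_nonneg (Real.sin θ), pow_pos hs 5]

lemma hasDerivAt_gfun {θ : ℝ} (h : θ ∈ Ioo 0 π) :
    HasDerivAt gfun ((Real.sin θ - θ * Real.cos θ) / Real.sin θ ^ 2) θ := by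
  have hs := sin_pos' h
  have := (hasDerivAt_id θ).div (Real.hasDerivAt_sin θ) hs.ne'
  refine this.congr_deriv (Eq.symm ?_)
  field_simp
  simp only [id]; ring

lemma pfun_strictMono : StrictMonoOn pfun (Ioo 0 π) := by
  apply strictMonoOn_of_deriv_pos (convex_Ioo 0 π)
  · intro x hx
    exact ((hasDerivAt_pfun hx).continuousAt).continuousWithinAt
  · intro x hx
    rw [interior_Ioo] at hx
    rw [(hasDerivAt_pfun hx).deriv]
    have := key_pos hx
    have := sin_pos' hx
    positivity

lemma gfun_strictMono : StrictMonoOn gfun (Ioo 0 π) := by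
  apply strictMonoOn_of_deriv_pos (convex_Ioo 0 π)
  · intro x hx
    exact ((hasDerivAt_gfun hx).continuousAt).continuousWithinAt
  · intro x hx
    rw [interior_Ioo] at hx
    rw [(hasDerivAt_gfun hx).deriv]
    have := key_pos hx
    have := sin_pos' hx
    positivity

lemma pfun_pos {θ : ℝ} (h : θ ∈ Ioo 0 π) : 0 < pfun θ := by
  have := num_pos h
  have := sin_pos' h
  unfold pfun; positivity

-- sin x / x → 1 as x → 0 within Ioi
lemma tendsto_sin_div : Tendsto (fun x : ℝ => Real.sin x / x) (𝓝[>] 0) (𝓝 1) := by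
  have h := (Real.hasDerivAt_sin 0)
  rw [hasDerivAt_iff_tendsto_slope] at h
  simp only [Real.cos_zero] at h
  have := h.mono_left (nhdsWithin_mono 0 (by intro x hx; exact ne_of_gt hx : Ioi (0:ℝ) ⊆ {0}ᶜ))
  refine this.congr' ?_
  filter_upwards [self_mem_nhdsWithin] with x hx
  simp [slope_def_field, Real.sin_zero]

lemma tendsto_sub_sin_cube : Tendsto (fun θ : ℝ => (θ - Real.sin θ) / θ ^ 3) (𝓝[>] 0) (𝓝 (1/6)) := by
  have l2 : Tendsto (fun θ : ℝ => (1 - Real.cos θ) / (3 * θ ^ 2)) (𝓝[>] 0) (𝓝 (1/6)) := by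
    apply HasDerivAt.lhopital_zero_right_on_Ioo (f' := fun θ => Real.sin θ)
      (g' := fun θ => 6 * θ) (b := 1) one_pos
    · intro x hx
      exact ((hasDerivAt_const x 1).sub (Real.hasDerivAt_cos x)).congr_deriv (by simp)
    · intro x hx
      have := ((hasDerivAt_id x).pow 2).const_mul (3:ℝ)
      refine this.congr_deriv (Eq.symm ?_); simp; ring
    · intro x hx; have := hx.1; positivity
    · have : ContinuousAt (fun θ : ℝ => 1 - Real.cos θ) 0 := by fun_prop
      have := (this.continuousWithinAt (s := Ioi 0)).tendsto
      simpa using this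
    · have : ContinuousAt (fun θ : ℝ => 3 * θ ^ 2) 0 := by fun_prop
      have := (this.continuousWithinAt (s := Ioi 0)).tendsto
      simpa using this
    · have : Tendsto (fun θ : ℝ => Real.sin θ / θ * (1/6)) (𝓝[>] 0) (𝓝 (1 * (1/6))) :=
        tendsto_sin_div.mul tendsto_const_nhds
      simp only [one_mul] at this
      refine this.congr' ?_
      filter_upwards [self_mem_nhdsWithin] with x hx
      have : (x:ℝ) ≠ 0 := ne_of_gt hx
      field_simp
  apply HasDerivAt.lhopital_zero_right_on_Ioo (f' := fun θ => 1 - Real.cos θ)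
    (g' := fun θ => 3 * θ ^ 2) (b := 1) one_pos
  · intro x hx
    exact (hasDerivAt_id x).sub (Real.hasDerivAt_sin x)
  · intro x hx
    have := (hasDerivAt_id x).pow 3
    refine this.congr_deriv (Eq.symm ?_); simp
  · intro x hx; have := hx.1; positivity
  · have : ContinuousAt (fun θ : ℝ => θ - Real.sin θ) 0 := by fun_prop
    have := (this.continuousWithinAt (s := Ioi 0)).tendsto
    simpa using this
  · have : ContinuousAt (fun θ : ℝ => θ ^ 3) 0 := by fun_prop
    have := (this.continuousWithinAt (s := Ioi 0)).tendsto
    simpa using this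
  · exact l2

lemma tendsto_num_cube :
    Tendsto (fun θ : ℝ => (θ - Real.sin θ * Real.cos θ) / θ ^ 3) (𝓝[>] 0) (𝓝 (2/3)) := by
  apply HasDerivAt.lhopital_zero_right_on_Ioo (f' := fun θ => 2 * Real.sin θ ^ 2)
    (g' := fun θ => 3 * θ ^ 2) (b := 1) one_pos
  · intro x hx
    have := (hasDerivAt_id x).sub ((Real.hasDerivAt_sin x).mul (Real.hasDerivAt_cos x))
    refine this.congr_deriv (Eq.symm ?_)
    nlinarith [Real.sin_sq_add_cos_sq x]
  · intro x hx
    have := (hasDerivAt_id x).pow 3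
    refine this.congr_deriv (Eq.symm ?_); simp
  · intro x hx; have := hx.1; positivity
  · have : ContinuousAt (fun θ : ℝ => θ - Real.sin θ * Real.cos θ) 0 := by fun_prop
    have := (this.continuousWithinAt (s := Ioi 0)).tendsto
    simpa using this
  · have : ContinuousAt (fun θ : ℝ => θ ^ 3) 0 := by fun_prop
    have := (this.continuousWithinAt (s := Ioi 0)).tendsto
    simpa using this
  · have h2 : Tendsto (fun θ : ℝ => Real.sin θ / θ * (Real.sin θ / θ) * (2/3)) (𝓝[>] 0)
        (𝓝 (1 * 1 * (2/3))) := (tendsto_sin_div.mul tendsto_sin_div).mul tendsto_const_nhds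
    simp only [one_mul] at h2
    refine h2.congr' ?_
    filter_upwards [self_mem_nhdsWithin] with x hx
    have hx0 : (x:ℝ) ≠ 0 := ne_of_gt hx
    field_simp

lemma tendsto_key_cube :
    Tendsto (fun θ : ℝ => (Real.sin θ - θ * Real.cos θ) / θ ^ 3) (𝓝[>] 0) (𝓝 (1/3)) := by
  apply HasDerivAt.lhopital_zero_right_on_Ioo (f' := fun θ => θ * Real.sin θ)
    (g' := fun θ => 3 * θ ^ 2) (b := 1) one_pos
  · intro x hx
    have := (Real.hasDerivAt_sin x).sub ((hasDerivAt_id x).mul (Real.hasDerivAt_cos x))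
    refine this.congr_deriv (Eq.symm ?_)
    simp
  · intro x hx
    have := (hasDerivAt_id x).pow 3
    refine this.congr_deriv (Eq.symm ?_); simp
  · intro x hx; have := hx.1; positivity
  · have : ContinuousAt (fun θ : ℝ => Real.sin θ - θ * Real.cos θ) 0 := by fun_prop
    have := (this.continuousWithinAt (s := Ioi 0)).tendsto
    simpa using this
  · have : ContinuousAt (fun θ : ℝ => θ ^ 3) 0 := by fun_prop
    have := (this.continuousWithinAt (s := Ioi 0)).tendsto
    simpa using this
  · have h2 : Tendsto (fun θ : ℝ => Real.sin θ / θ * (1/3)) (𝓝[>] 0) (𝓝 (1 * (1/3))) :=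
      tendsto_sin_div.mul tendsto_const_nhds
    simp only [one_mul] at h2
    refine h2.congr' ?_
    filter_upwards [self_mem_nhdsWithin] with x hx
    have hx0 : (x:ℝ) ≠ 0 := ne_of_gt hx
    field_simp

lemma tendsto_pfun_zero : Tendsto pfun (𝓝[>] 0) (𝓝 0) := by
  have h : Tendsto (fun θ : ℝ => (θ - Real.sin θ * Real.cos θ) / θ ^ 3 /
      (4 * (Real.sin θ / θ) ^ 2) * θ) (𝓝[>] 0) (𝓝 (2/3 / (4 * 1 ^ 2) * 0)) := by
    apply Tendsto.mul
    · exact tendsto_num_cube.div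
        ((tendsto_sin_div.pow 2).const_mul 4) (by norm_num)
    · exact tendsto_id.mono_left nhdsWithin_le_nhds
  simp only [mul_zero] at h
  refine h.congr' ?_
  filter_upwards [Ioo_mem_nhdsGT_of_mem (by constructor <;> [rfl; exact Real.pi_pos] :
    (0:ℝ) ∈ Ico 0 π)] with x hx
  have hs := sin_pos' hx
  have hx0 : (x:ℝ) ≠ 0 := ne_of_gt hx.1
  unfold pfun
  field_simp

lemma tendsto_pfun_pi : Tendsto pfun (𝓝[<] Real.pi) atTop := by
  have hN : Tendsto (fun θ : ℝ => θ - Real.sin θ * Real.cos θ) (𝓝[<] Real.pi) (𝓝 Real.pi) := by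
    have : ContinuousAt (fun θ : ℝ => θ - Real.sin θ * Real.cos θ) Real.pi := by fun_prop
    have := (this.continuousWithinAt (s := Iio Real.pi)).tendsto
    simpa using this
  have hD : Tendsto (fun θ : ℝ => 4 * Real.sin θ ^ 2) (𝓝[<] Real.pi) (𝓝[>] 0) := by
    apply tendsto_nhdsWithin_of_tendsto_nhds_of_eventually_within
    · have : ContinuousAt (fun θ : ℝ => 4 * Real.sin θ ^ 2) Real.pi := by fun_prop
      have := (this.continuousWithinAt (s := Iio Real.pi)).tendsto
      simpa using this
    · filter_upwards [Ioo_mem_nhdsLT_of_mem (by constructor <;> [exact Real.pi_pos; rfl] :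
        Real.pi ∈ Ioc 0 Real.pi)] with x hx
      have := sin_pos' hx
      exact mem_Ioi.2 (by positivity)
  have := hN.pos_mul_atTop Real.pi_pos (tendsto_inv_nhdsGT_zero.comp hD)
  refine this.congr (fun θ => ?_)
  simp [pfun, div_eq_mul_inv, Function.comp]

lemma pfun_surj (x : ℝ) (hx : 0 < x) : ∃ θ ∈ Ioo 0 Real.pi, pfun θ = x := by
  obtain ⟨a, ha, hpa⟩ : ∃ a ∈ Ioo 0 Real.pi, pfun a < x := by
    have h1 : ∀ᶠ θ in 𝓝[>] (0:ℝ), pfun θ < x := tendsto_pfun_zero.eventually_lt_const hx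
    have h2 : Ioo (0:ℝ) Real.pi ∈ 𝓝[>] (0:ℝ) :=
      Ioo_mem_nhdsGT_of_mem (by constructor <;> [rfl; exact Real.pi_pos])
    rcases (h1.and (Filter.eventually_of_mem h2 (fun x hx => hx))).exists with ⟨a, h⟩
    exact ⟨a, h.2, h.1⟩
  obtain ⟨b, hb, hab, hpb⟩ : ∃ b ∈ Ioo 0 Real.pi, a < b ∧ x < pfun b := by
    have h1 : ∀ᶠ θ in 𝓝[<] Real.pi, x < pfun θ := tendsto_pfun_pi.eventually_gt_atTop x
    have h2 : Ioo a Real.pi ∈ 𝓝[<] Real.pi :=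
      Ioo_mem_nhdsLT_of_mem (by constructor <;> [exact ha.2; rfl])
    rcases (h1.and (Filter.eventually_of_mem h2 (fun x hx => hx))).exists with ⟨b, h⟩
    exact ⟨b, ⟨lt_trans ha.1 h.2.1, h.2.2⟩, h.2.1, h.1⟩
  have hcont : ContinuousOn pfun (Icc a b) := by
    intro y hy
    have hy' : y ∈ Ioo 0 Real.pi := ⟨lt_of_lt_of_le ha.1 hy.1, lt_of_le_of_lt hy.2 hb.2⟩
    exact ((hasDerivAt_pfun hy').continuousAt).continuousWithinAt
  have := intermediate_value_Ioo hab.le hcont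
  have hmem : x ∈ Ioo (pfun a) (pfun b) := ⟨hpa, hpb⟩
  rcases this hmem with ⟨θ, hθ, hθx⟩
  exact ⟨θ, ⟨lt_trans ha.1 hθ.1, lt_trans hθ.2 hb.2⟩, hθx⟩

noncomputable def tfun (x : ℝ) : ℝ :=
  if h : 0 < x then (pfun_surj x h).choose else 0

lemma tfun_spec {x : ℝ} (hx : 0 < x) : tfun x ∈ Ioo 0 Real.pi ∧ pfun (tfun x) = x := by
  rw [tfun, dif_pos hx]
  exact ⟨(pfun_surj x hx).choose_spec.1, (pfun_surj x hx).choose_spec.2⟩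

lemma tfun_mem {x : ℝ} (hx : 0 < x) : tfun x ∈ Ioo 0 Real.pi := (tfun_spec hx).1
lemma pfun_tfun {x : ℝ} (hx : 0 < x) : pfun (tfun x) = x := (tfun_spec hx).2

lemma tfun_pfun {θ : ℝ} (h : θ ∈ Ioo 0 Real.pi) : tfun (pfun θ) = θ := by
  have hx := pfun_pos h
  exact pfun_strictMono.injOn (tfun_mem hx) h (pfun_tfun hx)

lemma tfun_strictMono : StrictMonoOn tfun (Ioi 0) := by
  intro x hx y hy hxy
  by_contra hle
  push_neg at hle
  have := pfun_strictMono.monotoneOn (tfun_mem hy) (tfun_mem hx) hle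
  rw [pfun_tfun hx, pfun_tfun hy] at this
  linarith

lemma tfun_lt_iff {x y : ℝ} (hx : 0 < x) (hy : 0 < y) : tfun x < tfun y ↔ x < y := by
  constructor
  · intro h
    have := pfun_strictMono (tfun_mem hx) (tfun_mem hy) h
    rwa [pfun_tfun hx, pfun_tfun hy] at this
  · exact fun h => tfun_strictMono hx hy h

lemma tendsto_tfun_zero : Tendsto tfun (𝓝[>] 0) (𝓝[>] 0) := by
  rw [tendsto_nhdsWithin_iff]
  constructor
  · rw [Metric.tendsto_nhdsWithin_nhds]
    intro ε hε
    set ε' := min ε (π/2) with hε'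
    have hε'0 : 0 < ε' := lt_min hε (by positivity)
    have hε'π : ε' < π := lt_of_le_of_lt (min_le_right _ _)
      (by linarith [Real.pi_pos])
    refine ⟨pfun ε', pfun_pos ⟨hε'0, hε'π⟩, fun {x} hx hdist => ?_⟩
    have hx0 : 0 < x := hx
    have h1 : x < pfun ε' := by
      rw [Real.dist_eq, abs_sub_lt_iff] at hdist
      linarith [hdist.1]
    have h2 : tfun x < ε' := by
      by_contra hge
      push_neg at hge
      have := pfun_strictMono.monotoneOn ⟨hε'0, hε'π⟩ (tfun_mem hx0) hge
      rw [pfun_tfun hx0] at this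
      linarith
    rw [Real.dist_eq, abs_sub_lt_iff]
    have := (tfun_mem hx0).1
    constructor
    · have : ε' ≤ ε := min_le_left _ _
      linarith
    · linarith [hε]
  · filter_upwards [self_mem_nhdsWithin] with x hx
    exact (tfun_mem hx).1

lemma tfun_image : tfun '' (Ioi 0) = Ioo 0 Real.pi := by
  ext θ
  constructor
  · rintro ⟨x, hx, rfl⟩
    exact tfun_mem hx
  · intro hθ
    exact ⟨pfun θ, pfun_pos hθ, tfun_pfun hθ⟩

lemma tfun_continuousAt {x : ℝ} (hx : 0 < x) : ContinuousAt tfun x := by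
  apply tfun_strictMono.continuousAt_of_image_mem_nhds (isOpen_Ioi.mem_nhds hx)
  rw [tfun_image]
  exact isOpen_Ioo.mem_nhds (tfun_mem hx)

lemma tendsto_gfun_one : Tendsto gfun (𝓝[>] 0) (𝓝 1) := by
  have h := tendsto_sin_div.inv₀ one_ne_zero
  norm_num at h
  exact h

lemma tendsto_DD : Tendsto (fun θ : ℝ => 4 * Real.sin θ ^ 3 * Real.cos θ /
    (Real.sin θ - θ * Real.cos θ)) (𝓝[>] 0) (𝓝 12) := by
  have hcos : Tendsto (fun θ : ℝ => Real.cos θ) (𝓝[>] 0) (𝓝 1) := by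
    have : ContinuousAt Real.cos 0 := Real.continuous_cos.continuousAt
    have := (this.continuousWithinAt (s := Ioi 0)).tendsto
    simpa using this
  have hnum : Tendsto (fun θ : ℝ => 4 * (Real.sin θ / θ) ^ 3 * Real.cos θ) (𝓝[>] 0)
      (𝓝 (4 * 1 ^ 3 * 1)) := (((tendsto_sin_div.pow 3).const_mul 4).mul hcos)
  have h := hnum.div tendsto_key_cube (by norm_num)
  norm_num at h
  refine h.congr' ?_
  filter_upwards [self_mem_nhdsWithin] with x hx
  have hx0 : (x:ℝ) ≠ 0 := ne_of_gt hx
  simp only [Pi.div_apply]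
  rw [div_div_eq_mul_div]
  congr 1
  field_simp

/-- `arc₁` is strictly increasing on `(0, ∞)`, `arc₁(0) = 1`, `arc₁'(0) = 0` and
`arc₁''(0) = 12` (one-sided derivatives at `0`). -/
theorem stmt5 (f : ℝ → ℝ) (hf : IsArcOne f) :
    f 0 = 1 ∧
    StrictMonoOn f (Set.Ioi 0) ∧
    derivWithin f (Set.Ici 0) 0 = 0 ∧
    derivWithin (derivWithin f (Set.Ici 0)) (Set.Ici 0) 0 = 12 := by
  obtain ⟨hcont, himp⟩ := hf
  have hfp : ∀ θ ∈ Ioo 0 Real.pi, f (pfun θ) = gfun θ := himp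
  have fval : ∀ x, 0 < x → f x = gfun (tfun x) := by
    intro x hx
    rw [← pfun_tfun hx, hfp _ (tfun_mem hx), tfun_pfun (tfun_mem hx)]
  -- strict monotonicity
  have hmono : StrictMonoOn f (Set.Ioi 0) := by
    intro x hx y hy hxy
    rw [fval x hx, fval y hy]
    exact gfun_strictMono (tfun_mem hx) (tfun_mem hy) (tfun_strictMono hx hy hxy)
  -- value at 0
  have hf0 : f 0 = 1 := by
    have h1 : Tendsto f (𝓝[>] 0) (𝓝 (f 0)) :=
      ((hcont 0 self_mem_Ici).tendsto).mono_left (nhdsWithin_mono 0 Ioi_subset_Ici_self)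
    have h2 : Tendsto f (𝓝[>] 0) (𝓝 1) := by
      have := tendsto_gfun_one.comp tendsto_tfun_zero
      refine this.congr' ?_
      filter_upwards [self_mem_nhdsWithin] with x hx
      exact (fval x hx).symm
    exact tendsto_nhds_unique h1 h2
  -- derivative formula on (0, ∞)
  have hDf : ∀ x, 0 < x → HasDerivAt tfun
      (((Real.sin (tfun x) - tfun x * Real.cos (tfun x)) / (2 * Real.sin (tfun x) ^ 3))⁻¹) x := by
    intro x hx
    have hmem := tfun_mem hx
    have hkey := key_pos hmem
    have hs := sin_pos' hmem
    have hne : (Real.sin (tfun x) - tfun x * Real.cos (tfun x)) / (2 * Real.sin (tfun x) ^ 3) ≠ 0 := by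
      positivity
    have hp : HasDerivAt pfun
        ((Real.sin (tfun x) - tfun x * Real.cos (tfun x)) / (2 * Real.sin (tfun x) ^ 3)) (tfun x) :=
      hasDerivAt_pfun hmem
    exact hp.of_local_left_inverse (tfun_continuousAt hx) hne
      (by filter_upwards [isOpen_Ioi.mem_nhds hx] with y hy; exact pfun_tfun hy)
  have hfd : ∀ x, 0 < x → HasDerivAt f (2 * Real.sin (tfun x)) x := by
    intro x hx
    have hmem := tfun_mem hx
    have hkey := key_pos hmem
    have hs := sin_pos' hmem
    have hg : HasDerivAt gfun
        ((Real.sin (tfun x) - tfun x * Real.cos (tfun x)) / Real.sin (tfun x) ^ 2) (tfun x) :=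
      hasDerivAt_gfun hmem
    have hcomp := hg.comp x (hDf x hx)
    have heq : f =ᶠ[𝓝 x] (gfun ∘ tfun) := by
      filter_upwards [isOpen_Ioi.mem_nhds hx] with y hy
      exact fval y hy
    have := hcomp.congr_of_eventuallyEq heq
    refine this.congr_deriv (Eq.symm ?_)
    field_simp
  -- first derivative at 0
  have hderiv0 : HasDerivWithinAt f 0 (Set.Ici 0) 0 := by
    apply hasDerivWithinAt_Ici_of_tendsto_deriv (s := Ioi 0)
    · intro x hx
      exact ((hfd x hx).differentiableAt).differentiableWithinAt
    · exact (hcont 0 self_mem_Ici).mono Ioi_subset_Ici_self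
    · exact self_mem_nhdsWithin
    · have h2 : Tendsto (fun x => 2 * Real.sin (tfun x)) (𝓝[>] 0) (𝓝 0) := by
        have hsin : Tendsto (fun θ : ℝ => 2 * Real.sin θ) (𝓝[>] 0) (𝓝 0) := by
          have : ContinuousAt (fun θ : ℝ => 2 * Real.sin θ) 0 := by fun_prop
          have := (this.continuousWithinAt (s := Ioi 0)).tendsto
          simpa using this
        exact hsin.comp tendsto_tfun_zero
      refine h2.congr' ?_
      filter_upwards [self_mem_nhdsWithin] with x hx
      exact ((hfd x hx).deriv).symm
  have hd1 : derivWithin f (Set.Ici 0) 0 = 0 :=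
    hderiv0.derivWithin (uniqueDiffOn_Ici 0 0 self_mem_Ici)
  -- second derivative at 0
  set F := derivWithin f (Set.Ici 0) with hFdef
  have hFeq : ∀ x, 0 < x → F x = 2 * Real.sin (tfun x) := by
    intro x hx
    rw [hFdef, derivWithin_of_mem_nhds (Ici_mem_nhds hx), (hfd x hx).deriv]
  have hFd : ∀ x, 0 < x → HasDerivAt F
      (4 * Real.sin (tfun x) ^ 3 * Real.cos (tfun x) /
        (Real.sin (tfun x) - tfun x * Real.cos (tfun x))) x := by
    intro x hx
    have hmem := tfun_mem hx
    have hkey := key_pos hmem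
    have hs := sin_pos' hmem
    have hcomp := ((Real.hasDerivAt_sin (tfun x)).comp x (hDf x hx)).const_mul 2
    have heq : F =ᶠ[𝓝 x] (fun y => 2 * Real.sin (tfun y)) := by
      filter_upwards [isOpen_Ioi.mem_nhds hx] with y hy
      exact hFeq y hy
    have := hcomp.congr_of_eventuallyEq heq
    refine this.congr_deriv (Eq.symm ?_)
    field_simp
    ring
  have hFtendsto : Tendsto F (𝓝[>] 0) (𝓝 0) := by
    have hsin : Tendsto (fun θ : ℝ => 2 * Real.sin θ) (𝓝[>] 0) (𝓝 0) := by
      have : ContinuousAt (fun θ : ℝ => 2 * Real.sin θ) 0 := by fun_prop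
      have := (this.continuousWithinAt (s := Ioi 0)).tendsto
      simpa using this
    have := hsin.comp tendsto_tfun_zero
    refine this.congr' ?_
    filter_upwards [self_mem_nhdsWithin] with x hx
    exact (hFeq x hx).symm
  have hderiv20 : HasDerivWithinAt F 12 (Set.Ici 0) 0 := by
    apply hasDerivWithinAt_Ici_of_tendsto_deriv (s := Ioi 0)
    · intro x hx
      exact ((hFd x hx).differentiableAt).differentiableWithinAt
    · show Tendsto F (𝓝[Ioi 0] 0) (𝓝 (F 0))
      rw [show F 0 = 0 from hd1]
      exact hFtendsto
    · exact self_mem_nhdsWithin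
    · have h2 := tendsto_DD.comp tendsto_tfun_zero
      refine h2.congr' ?_
      filter_upwards [self_mem_nhdsWithin] with x hx
      exact ((hFd x hx).deriv).symm
  exact ⟨hf0, hmono, hd1, hderiv20.derivWithin (uniqueDiffOn_Ici 0 0 self_mem_Ici)⟩
end
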